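/- The proxy social welfare function F_p is submodular: for all A ⊆ B ⊆ T and any t ∈ T \ B, F_p(A ∪ {t}) − F_p(A) ≥ F_p(B ∪ {t}) − F_p(B), even when the revealed targets include negatively labeled ones. -/

import Mathlib

open Finset

variable {Agent Target : Type*}

def posN [DecidableEq Target] (N : Agent → Finset Target) (f : Target → Bool) (x : Agent) :
    Finset Target :=
  (N x).filter (fun t => f t = true)

def negN [DecidableEq Target] (N : Agent → Finset Target) (f : Target → Bool) (x : Agent) :
    Finset Target :=
  (N x).filter (fun t => f t = false)

/-- The probability mass agent `x` places on positive targets given revealed set `S`. -/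
noncomputable def Q [DecidableEq Target] (N : Agent → Finset Target) (f : Target → Bool)
    (S : Finset Target) (x : Agent) : ℝ :=
  if (posN N f x ∩ S).Nonempty then 1
  else if (N x).Nonempty then
    ((posN N f x).card : ℝ) /
      (((posN N f x).card : ℝ) + (((negN N f x).card : ℝ) - ((negN N f x ∩ S).card : ℝ)))
  else 0

/-- Social welfare. -/
noncomputable def F [Fintype Agent] [DecidableEq Target] (N : Agent → Finset Target)
    (f : Target → Bool) (S : Finset Target) : ℝ :=
  ∑ x, Q N f S x

/-- The proxy probability mass: revealing negative neighbors beyond the first only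
contributes the amount the first one helped. -/
noncomputable def Qp [DecidableEq Target] (N : Agent → Finset Target) (f : Target → Bool)
    (S : Finset Target) (x : Agent) : ℝ :=
  if (posN N f x ∩ S).Nonempty then 1
  else if (N x).Nonempty then
    ((posN N f x).card : ℝ) /
        (((N x).card : ℝ) - (if 1 ≤ (negN N f x ∩ S).card then 1 else 0)) *
      (1 + (((negN N f x ∩ S).card - 1 : ℕ) : ℝ) / ((N x).card : ℝ))
  else 0

/-- Proxy social welfare. -/
noncomputable def Fp [Fintype Agent] [DecidableEq Target] (N : Agent → Finset Target)
    (f : Target → Bool) (S : Finset Target) : ℝ :=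
  ∑ x, Qp N f S x

/-- Closed-form value of `Qp` when no positive neighbor is revealed. -/
noncomputable def qv [DecidableEq Target] (N : Agent → Finset Target) (f : Target → Bool)
    (x : Agent) (k : ℕ) : ℝ :=
  ((posN N f x).card : ℝ) / ((N x).card : ℝ) +
    (k : ℝ) * (((posN N f x).card : ℝ) / (((N x).card : ℝ) * (((N x).card : ℝ) - 1)))

lemma card_posN_add_negN [DecidableEq Target] (N : Agent → Finset Target) (f : Target → Bool)
    (x : Agent) : (posN N f x).card + (negN N f x).card = (N x).card := by
  classical
  have h : negN N f x = (N x).filter (fun t => ¬ f t = true) := by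
    unfold negN
    apply Finset.filter_congr
    intro u _
    simp [Bool.not_eq_true]
  unfold posN
  rw [h, Finset.card_filter_add_card_filter_not (s := N x) (p := fun t => f t = true)]

lemma Qp_eq_qv [DecidableEq Target] (N : Agent → Finset Target) (f : Target → Bool)
    (S : Finset Target) (x : Agent) (h : ¬(posN N f x ∩ S).Nonempty) :
    Qp N f S x = qv N f x ((negN N f x ∩ S).card) := by
  have hk : (negN N f x ∩ S).card ≤ (negN N f x).card :=
    Finset.card_le_card Finset.inter_subset_left
  have hsum := card_posN_add_negN N f x
  unfold Qp qv
  rw [if_neg h]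
  by_cases hN : (N x).Nonempty
  · rw [if_pos hN]
    have hn1 : 1 ≤ (N x).card := Finset.card_pos.mpr hN
    rcases Nat.eq_zero_or_pos (negN N f x ∩ S).card with hk0 | hk1
    · rw [hk0]
      norm_num
    · rw [if_pos (show 1 ≤ (negN N f x ∩ S).card from hk1)]
      obtain ⟨m, hm⟩ : ∃ m, (negN N f x ∩ S).card = m + 1 :=
        ⟨(negN N f x ∩ S).card - 1, (Nat.succ_pred_eq_of_pos hk1).symm⟩
      rw [hm]
      rcases Nat.eq_zero_or_pos (posN N f x).card with hd0 | hd1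
      · rw [hd0]; simp
      · have hn2 : 2 ≤ (N x).card := by omega
        have h0 : ((N x).card : ℝ) ≠ 0 := Nat.cast_ne_zero.mpr (by omega)
        have h2 : (2 : ℝ) ≤ ((N x).card : ℝ) := by exact_mod_cast hn2
        have h1 : ((N x).card : ℝ) - 1 ≠ 0 := by linarith
        simp only [Nat.add_sub_cancel]
        push_cast
        field_simp
        ring
  · rw [if_neg hN]
    have hc : (N x).card = 0 := by
      rw [Finset.not_nonempty_iff_eq_empty] at hN
      simp [hN]
    have hd : (posN N f x).card = 0 := by omega
    simp [hc, hd]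

lemma qv_le_one [DecidableEq Target] (N : Agent → Finset Target) (f : Target → Bool)
    (x : Agent) (k : ℕ) (hk : k ≤ (negN N f x).card) : qv N f x k ≤ 1 := by
  have hsum := card_posN_add_negN N f x
  unfold qv
  set d := (posN N f x).card with hd
  set nc := (negN N f x).card with hnc
  rcases Nat.eq_zero_or_pos (N x).card with h0 | h1
  · have : d = 0 := by omega
    simp [this, h0]
  · rcases Nat.lt_or_ge (N x).card 2 with hlt | hge
    · -- card = 1
      have hcard : (N x).card = 1 := by omega
      have hk0 : k * d = 0 := by
        rcases Nat.eq_zero_or_pos d with h | h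
        · simp [h]
        · have : nc = 0 := by omega
          have : k = 0 := by omega
          simp [this]
      rcases Nat.eq_zero_or_pos d with h | h
      · simp [h]
      · have hd1 : d = 1 := by omega
        have hk' : k = 0 := by
          have : nc = 0 := by omega
          omega
        simp [hd1, hcard, hk']
    · have hn : (2 : ℝ) ≤ ((N x).card : ℝ) := by exact_mod_cast hge
      have hn0 : (0 : ℝ) < ((N x).card : ℝ) := by linarith
      have hn1 : (0 : ℝ) < ((N x).card : ℝ) - 1 := by linarith
      have hprod : (0 : ℝ) < ((N x).card : ℝ) * (((N x).card : ℝ) - 1) := by positivity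
      have e : (d : ℝ) / ((N x).card : ℝ) +
          (k : ℝ) * ((d : ℝ) / (((N x).card : ℝ) * (((N x).card : ℝ) - 1)))
          = ((d : ℝ) * (((N x).card : ℝ) - 1) + (k : ℝ) * (d : ℝ)) /
            (((N x).card : ℝ) * (((N x).card : ℝ) - 1)) := by
        field_simp
      rw [e, div_le_one hprod]
      have hsum' : ((N x).card : ℝ) = (d : ℝ) + (nc : ℝ) := by exact_mod_cast hsum.symm
      have hk' : (k : ℝ) ≤ (nc : ℝ) := by exact_mod_cast hk
      have hd0 : (0 : ℝ) ≤ (d : ℝ) := Nat.cast_nonneg _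
      have hnc0 : (0 : ℝ) ≤ (nc : ℝ) := Nat.cast_nonneg _
      rcases Nat.eq_zero_or_pos nc with hz | hp
      · have hkz : k = 0 := by omega
        simp only [hz, hkz, Nat.cast_zero] at hsum' ⊢
        nlinarith
      · have hnc1 : (1 : ℝ) ≤ (nc : ℝ) := by exact_mod_cast hp
        nlinarith [mul_nonneg (sub_nonneg.mpr hk') hd0,
          mul_nonneg hnc0 (sub_nonneg.mpr hnc1)]

lemma qv_mono [DecidableEq Target] (N : Agent → Finset Target) (f : Target → Bool)
    (x : Agent) {k k' : ℕ} (h : k ≤ k') : qv N f x k ≤ qv N f x k' := by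
  unfold qv
  have hprod : (0 : ℝ) ≤ ((N x).card : ℝ) * (((N x).card : ℝ) - 1) := by
    rcases Nat.eq_zero_or_pos (N x).card with h' | h'
    · simp [h']
    · have h1 : (1 : ℝ) ≤ ((N x).card : ℝ) := by exact_mod_cast h'
      nlinarith
  have hc : (0 : ℝ) ≤ ((posN N f x).card : ℝ) /
      (((N x).card : ℝ) * (((N x).card : ℝ) - 1)) :=
    div_nonneg (Nat.cast_nonneg _) hprod
  have hk : (k : ℝ) ≤ (k' : ℝ) := by exact_mod_cast h
  nlinarith

lemma qv_succ_sub [DecidableEq Target] (N : Agent → Finset Target) (f : Target → Bool)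
    (x : Agent) (k : ℕ) :
    qv N f x (k + 1) - qv N f x k =
      ((posN N f x).card : ℝ) / (((N x).card : ℝ) * (((N x).card : ℝ) - 1)) := by
  unfold qv
  push_cast
  ring

lemma Qp_le_one [DecidableEq Target] (N : Agent → Finset Target) (f : Target → Bool)
    (S : Finset Target) (x : Agent) : Qp N f S x ≤ 1 := by
  by_cases h : (posN N f x ∩ S).Nonempty
  · unfold Qp; rw [if_pos h]
  · rw [Qp_eq_qv N f S x h]
    exact qv_le_one N f x _ (Finset.card_le_card Finset.inter_subset_left)

lemma Qp_mono [DecidableEq Target] (N : Agent → Finset Target) (f : Target → Bool)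
    {A B : Finset Target} (hAB : A ⊆ B) (x : Agent) : Qp N f A x ≤ Qp N f B x := by
  by_cases hA : (posN N f x ∩ A).Nonempty
  · have hB : (posN N f x ∩ B).Nonempty :=
      hA.mono (Finset.inter_subset_inter Finset.Subset.rfl hAB)
    unfold Qp
    rw [if_pos hA, if_pos hB]
  · rw [Qp_eq_qv N f A x hA]
    by_cases hB : (posN N f x ∩ B).Nonempty
    · have h1 : Qp N f B x = 1 := by unfold Qp; rw [if_pos hB]
      rw [h1]
      exact qv_le_one N f x _ (Finset.card_le_card Finset.inter_subset_left)
    · rw [Qp_eq_qv N f B x hB]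
      exact qv_mono N f x
        (Finset.card_le_card (Finset.inter_subset_inter Finset.Subset.rfl hAB))

lemma Qp_congr [DecidableEq Target] (N : Agent → Finset Target) (f : Target → Bool)
    {S S' : Finset Target} (x : Agent)
    (h1 : posN N f x ∩ S = posN N f x ∩ S') (h2 : negN N f x ∩ S = negN N f x ∩ S') :
    Qp N f S x = Qp N f S' x := by
  unfold Qp
  rw [h1, h2]

lemma Qp_pointwise [DecidableEq Target] (N : Agent → Finset Target) (f : Target → Bool)
    (A B : Finset Target) (t : Target) (hAB : A ⊆ B) (htB : t ∉ B) (x : Agent) :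
    Qp N f (insert t B) x - Qp N f B x ≤ Qp N f (insert t A) x - Qp N f A x := by
  have htA : t ∉ A := fun h => htB (hAB h)
  by_cases htp : t ∈ posN N f x
  · have hiA : (posN N f x ∩ insert t A).Nonempty :=
      ⟨t, Finset.mem_inter.2 ⟨htp, Finset.mem_insert_self _ _⟩⟩
    have hiB : (posN N f x ∩ insert t B).Nonempty :=
      ⟨t, Finset.mem_inter.2 ⟨htp, Finset.mem_insert_self _ _⟩⟩
    have e1 : Qp N f (insert t A) x = 1 := by unfold Qp; rw [if_pos hiA]
    have e2 : Qp N f (insert t B) x = 1 := by unfold Qp; rw [if_pos hiB]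
    rw [e1, e2]
    have := Qp_mono N f hAB x
    linarith
  · have hpA : posN N f x ∩ insert t A = posN N f x ∩ A := by
      ext u
      simp only [Finset.mem_inter, Finset.mem_insert]
      constructor
      · rintro ⟨hu, rfl | hu2⟩
        · exact absurd hu htp
        · exact ⟨hu, hu2⟩
      · rintro ⟨hu, hu2⟩; exact ⟨hu, Or.inr hu2⟩
    have hpB : posN N f x ∩ insert t B = posN N f x ∩ B := by
      ext u
      simp only [Finset.mem_inter, Finset.mem_insert]
      constructor
      · rintro ⟨hu, rfl | hu2⟩
        · exact absurd hu htp
        · exact ⟨hu, hu2⟩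
      · rintro ⟨hu, hu2⟩; exact ⟨hu, Or.inr hu2⟩
    by_cases htn : t ∈ negN N f x
    · have hnA : negN N f x ∩ insert t A = insert t (negN N f x ∩ A) := by
        ext u
        simp only [Finset.mem_inter, Finset.mem_insert]
        constructor
        · rintro ⟨hu, rfl | hu2⟩
          · exact Or.inl rfl
          · exact Or.inr ⟨hu, hu2⟩
        · rintro (rfl | ⟨hu, hu2⟩)
          · exact ⟨htn, Or.inl rfl⟩
          · exact ⟨hu, Or.inr hu2⟩
      have hnB : negN N f x ∩ insert t B = insert t (negN N f x ∩ B) := by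
        ext u
        simp only [Finset.mem_inter, Finset.mem_insert]
        constructor
        · rintro ⟨hu, rfl | hu2⟩
          · exact Or.inl rfl
          · exact Or.inr ⟨hu, hu2⟩
        · rintro (rfl | ⟨hu, hu2⟩)
          · exact ⟨htn, Or.inl rfl⟩
          · exact ⟨hu, Or.inr hu2⟩
      have hcA : (negN N f x ∩ insert t A).card = (negN N f x ∩ A).card + 1 := by
        rw [hnA, Finset.card_insert_of_notMem]
        intro h
        exact htA (Finset.mem_inter.1 h).2
      have hcB : (negN N f x ∩ insert t B).card = (negN N f x ∩ B).card + 1 := by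
        rw [hnB, Finset.card_insert_of_notMem]
        intro h
        exact htB (Finset.mem_inter.1 h).2
      by_cases hA : (posN N f x ∩ A).Nonempty
      · have hB : (posN N f x ∩ B).Nonempty :=
          hA.mono (Finset.inter_subset_inter Finset.Subset.rfl hAB)
        have e1 : Qp N f (insert t A) x = 1 := by
          unfold Qp; rw [if_pos (hpA ▸ hA)]
        have e2 : Qp N f A x = 1 := by unfold Qp; rw [if_pos hA]
        have e3 : Qp N f (insert t B) x = 1 := by
          unfold Qp; rw [if_pos (hpB ▸ hB)]
        have e4 : Qp N f B x = 1 := by unfold Qp; rw [if_pos hB]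
        rw [e1, e2, e3, e4]
      · have hA' : ¬(posN N f x ∩ insert t A).Nonempty := by rw [hpA]; exact hA
        have eA : Qp N f (insert t A) x - Qp N f A x =
            ((posN N f x).card : ℝ) / (((N x).card : ℝ) * (((N x).card : ℝ) - 1)) := by
          rw [Qp_eq_qv N f (insert t A) x hA', Qp_eq_qv N f A x hA, hcA, qv_succ_sub]
        by_cases hB : (posN N f x ∩ B).Nonempty
        · have e3 : Qp N f (insert t B) x = 1 := by
            unfold Qp; rw [if_pos (hpB ▸ hB)]
          have e4 : Qp N f B x = 1 := by unfold Qp; rw [if_pos hB]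
          rw [e3, e4, eA]
          have : qv N f x ((negN N f x ∩ A).card) ≤
              qv N f x ((negN N f x ∩ A).card + 1) := qv_mono N f x (Nat.le_succ _)
          have := qv_succ_sub N f x ((negN N f x ∩ A).card)
          linarith
        · have hB' : ¬(posN N f x ∩ insert t B).Nonempty := by rw [hpB]; exact hB
          have eB : Qp N f (insert t B) x - Qp N f B x =
              ((posN N f x).card : ℝ) / (((N x).card : ℝ) * (((N x).card : ℝ) - 1)) := by
            rw [Qp_eq_qv N f (insert t B) x hB', Qp_eq_qv N f B x hB, hcB, qv_succ_sub]
          rw [eA, eB]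
    · have hnA : negN N f x ∩ insert t A = negN N f x ∩ A := by
        ext u
        simp only [Finset.mem_inter, Finset.mem_insert]
        constructor
        · rintro ⟨hu, rfl | hu2⟩
          · exact absurd hu htn
          · exact ⟨hu, hu2⟩
        · rintro ⟨hu, hu2⟩; exact ⟨hu, Or.inr hu2⟩
      have hnB : negN N f x ∩ insert t B = negN N f x ∩ B := by
        ext u
        simp only [Finset.mem_inter, Finset.mem_insert]
        constructor
        · rintro ⟨hu, rfl | hu2⟩
          · exact absurd hu htn
          · exact ⟨hu, hu2⟩
        · rintro ⟨hu, hu2⟩; exact ⟨hu, Or.inr hu2⟩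
      rw [Qp_congr N f x hpA hnA, Qp_congr N f x hpB hnB]
      simp

/-- The proxy social welfare function is submodular, even when the revealed targets
include negatively labeled ones. -/
theorem proxy_welfare_submodular [Fintype Agent] [DecidableEq Target]
    (N : Agent → Finset Target) (f : Target → Bool)
    (A B : Finset Target) (t : Target) (hAB : A ⊆ B) (htB : t ∉ B) :
    Fp N f (insert t B) - Fp N f B ≤ Fp N f (insert t A) - Fp N f A := by
  unfold Fp
  rw [← Finset.sum_sub_distrib, ← Finset.sum_sub_distrib]
  exact Finset.sum_le_sum fun x _ => Qp_pointwise N f A B t hAB htB x
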